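/- Given a clique partition of K_n into cliques Q_1, ..., Q_N each of order at most k, and a graph F on the same n vertices with m edges, the complement of F admits a clique partition into at most N + 2mk cliques. -/

import Mathlib

/-- `P` is a clique partition of `G`. -/
def IsCliquePartition {V : Type*} (G : SimpleGraph V) (P : Finset (Finset V)) : Prop :=
  (∀ Q ∈ P, ∀ u ∈ Q, ∀ v ∈ Q, u ≠ v → G.Adj u v) ∧
  (∀ u v : V, G.Adj u v → ∃! Q : Finset V, Q ∈ P ∧ u ∈ Q ∧ v ∈ Q)

section aux

variable {n : ℕ} (F : SimpleGraph (Fin n)) [DecidableRel F.Adj] (Q : Finset (Fin n))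

/-- Vertices of `Q` incident to an `F`-edge inside `Q`. -/
def auxS : Finset (Fin n) :=
  Q.filter (fun v => ∃ w ∈ Q, F.Adj v w)

/-- 2-element pieces: `Fᶜ`-edges inside `Q` with first endpoint in `auxS`. -/
def auxE : Finset (Finset (Fin n)) :=
  ((auxS F Q ×ˢ Q).filter (fun p => ¬ F.Adj p.1 p.2 ∧ p.1 ≠ p.2)).image
    (fun p => ({p.1, p.2} : Finset (Fin n)))

/-- Ordered `F`-edges inside `Q`. -/
def auxT : Finset (Fin n × Fin n) :=
  (Q ×ˢ Q).filter (fun p => F.Adj p.1 p.2)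

def pieces : Finset (Finset (Fin n)) :=
  insert (Q \ auxS F Q) (auxE F Q)

variable {F Q}

lemma mem_auxE {X : Finset (Fin n)} (hX : X ∈ auxE F Q) :
    ∃ a b, a ∈ auxS F Q ∧ b ∈ Q ∧ ¬ F.Adj a b ∧ a ≠ b ∧ X = {a, b} := by
  simp only [auxE, Finset.mem_image, Finset.mem_filter, Finset.mem_product] at hX
  obtain ⟨⟨a, b⟩, ⟨⟨ha, hb⟩, hnadj, hne⟩, rfl⟩ := hX
  exact ⟨a, b, ha, hb, hnadj, hne, rfl⟩

lemma pieces_subset {X : Finset (Fin n)} (hX : X ∈ pieces F Q) : X ⊆ Q := by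
  rcases Finset.mem_insert.1 hX with rfl | hX
  · exact Finset.sdiff_subset
  · obtain ⟨a, b, ha, hb, -, -, rfl⟩ := mem_auxE hX
    have ha' : a ∈ Q := Finset.mem_filter.1 ha |>.1
    intro x hx
    rcases Finset.mem_insert.1 hx with rfl | hx
    · exact ha'
    · rwa [Finset.mem_singleton.1 hx]

lemma pieces_clique {X : Finset (Fin n)} (hX : X ∈ pieces F Q)
    {u v : Fin n} (hu : u ∈ X) (hv : v ∈ X) (huv : u ≠ v) : Fᶜ.Adj u v := by
  rw [SimpleGraph.compl_adj]
  refine ⟨huv, ?_⟩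
  rcases Finset.mem_insert.1 hX with rfl | hX
  · intro hadj
    have hu' := Finset.mem_sdiff.1 hu
    have hv' := Finset.mem_sdiff.1 hv
    exact hu'.2 (Finset.mem_filter.2 ⟨hu'.1, v, hv'.1, hadj⟩)
  · obtain ⟨a, b, -, -, hnadj, -, rfl⟩ := mem_auxE hX
    simp only [Finset.mem_insert, Finset.mem_singleton] at hu hv
    rcases hu with rfl | rfl <;> rcases hv with rfl | rfl
    · exact absurd rfl huv
    · exact hnadj
    · exact fun h => hnadj h.symm
    · exact absurd rfl huv

/-- Given an `Fᶜ`-edge inside `Q`, some piece contains it. -/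
lemma pieces_cover {u v : Fin n} (hu : u ∈ Q) (hv : v ∈ Q)
    (hne : u ≠ v) (hnadj : ¬ F.Adj u v) :
    ∃ X ∈ pieces F Q, u ∈ X ∧ v ∈ X := by
  by_cases hus : u ∈ auxS F Q
  · refine ⟨{u, v}, Finset.mem_insert_of_mem ?_, by simp, by simp⟩
    exact Finset.mem_image.2 ⟨(u, v), Finset.mem_filter.2
      ⟨Finset.mem_product.2 ⟨hus, hv⟩, hnadj, hne⟩, rfl⟩
  · by_cases hvs : v ∈ auxS F Q
    · refine ⟨{v, u}, Finset.mem_insert_of_mem ?_, by simp, by simp⟩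
      exact Finset.mem_image.2 ⟨(v, u), Finset.mem_filter.2
        ⟨Finset.mem_product.2 ⟨hvs, hu⟩, fun h => hnadj h.symm, hne.symm⟩, rfl⟩
    · exact ⟨Q \ auxS F Q, Finset.mem_insert_self _ _,
        Finset.mem_sdiff.2 ⟨hu, hus⟩, Finset.mem_sdiff.2 ⟨hv, hvs⟩⟩

/-- Any piece containing an `Fᶜ`-edge is determined by that edge. -/
lemma pieces_unique {u v : Fin n} (hne : u ≠ v)
    {X : Finset (Fin n)} (hX : X ∈ pieces F Q) (hu : u ∈ X) (hv : v ∈ X) :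
    X = if u ∈ auxS F Q ∨ v ∈ auxS F Q then {u, v} else Q \ auxS F Q := by
  split_ifs with hs
  · rcases Finset.mem_insert.1 hX with rfl | hX
    · exfalso
      rcases hs with hs | hs
      · exact (Finset.mem_sdiff.1 hu).2 hs
      · exact (Finset.mem_sdiff.1 hv).2 hs
    · obtain ⟨a, b, -, -, -, hab, rfl⟩ := mem_auxE hX
      have hcard : ({a, b} : Finset (Fin n)).card = 2 := Finset.card_pair hab
      have hsub : ({u, v} : Finset (Fin n)) ⊆ {a, b} := by
        intro x hx
        rcases Finset.mem_insert.1 hx with rfl | hx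
        · exact hu
        · rwa [Finset.mem_singleton.1 hx]
      exact (Finset.eq_of_subset_of_card_le hsub
        (by rw [hcard, Finset.card_pair hne])).symm
  · rcases Finset.mem_insert.1 hX with rfl | hX
    · rfl
    · exfalso
      obtain ⟨a, b, ha, -, -, hab, rfl⟩ := mem_auxE hX
      have hcard : ({a, b} : Finset (Fin n)).card = 2 := Finset.card_pair hab
      have hsub : ({u, v} : Finset (Fin n)) ⊆ {a, b} := by
        intro x hx
        rcases Finset.mem_insert.1 hx with rfl | hx
        · exact hu
        · rwa [Finset.mem_singleton.1 hx]
      have heq := Finset.eq_of_subset_of_card_le hsub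
        (by rw [hcard, Finset.card_pair hne])
      have haS : a ∈ ({u, v} : Finset (Fin n)) := heq ▸ Finset.mem_insert_self _ _
      rcases Finset.mem_insert.1 haS with rfl | haS
      · exact hs (Or.inl ha)
      · rw [Finset.mem_singleton.1 haS] at ha
        exact hs (Or.inr ha)

lemma card_auxS_le : (auxS F Q).card ≤ (auxT F Q).card := by
  classical
  refine Finset.card_le_card_of_injOn
    (fun v => (v, if h : ∃ w ∈ Q, F.Adj v w then h.choose else v)) ?_ ?_
  · intro v hv
    simp only [Finset.mem_coe, auxS, Finset.mem_filter] at hv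
    obtain ⟨hvQ, hex⟩ := hv
    dsimp only
    rw [dif_pos hex]
    exact Finset.mem_filter.2 ⟨Finset.mem_product.2 ⟨hvQ, hex.choose_spec.1⟩,
      hex.choose_spec.2⟩
  · intro a _ b _ hab
    exact congrArg Prod.fst hab

lemma card_auxE_le : (auxE F Q).card ≤ (auxS F Q).card * Q.card := by
  calc (auxE F Q).card ≤ ((auxS F Q ×ˢ Q).filter
        (fun p => ¬ F.Adj p.1 p.2 ∧ p.1 ≠ p.2)).card := Finset.card_image_le
    _ ≤ (auxS F Q ×ˢ Q).card := Finset.card_filter_le _ _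
    _ = (auxS F Q).card * Q.card := Finset.card_product _ _

end aux

/-- Given a clique partition of `K_n` into `N` cliques each of order at
most `k`, and a graph `F` on the same `n` vertices with `m` edges, the complement of `F`
admits a clique partition into at most `N + 2mk` cliques. -/
theorem stmt14 (n k : ℕ) (F : SimpleGraph (Fin n))
    (P : Finset (Finset (Fin n))) (hP : IsCliquePartition (⊤ : SimpleGraph (Fin n)) P)
    (hk : ∀ Q ∈ P, Q.card ≤ k) :
    ∃ P' : Finset (Finset (Fin n)), IsCliquePartition Fᶜ P' ∧
      P'.card ≤ P.card + 2 * F.edgeSet.ncard * k := by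
  classical
  obtain ⟨hPclique, hPpart⟩ := hP
  refine ⟨P.biUnion (fun Q => pieces F Q), ⟨?_, ?_⟩, ?_⟩
  · -- cliques
    intro X hX u hu v hv huv
    obtain ⟨Q, -, hXQ⟩ := Finset.mem_biUnion.1 hX
    exact pieces_clique hXQ hu hv huv
  · -- existence and uniqueness
    intro u v hadj
    rw [SimpleGraph.compl_adj] at hadj
    obtain ⟨hne, hnadj⟩ := hadj
    obtain ⟨Q₀, ⟨hQ₀, huQ₀, hvQ₀⟩, hQ₀uniq⟩ := hPpart u v (by simpa using hne)
    obtain ⟨X₀, hX₀, huX₀, hvX₀⟩ := pieces_cover huQ₀ hvQ₀ hne hnadj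
    refine ⟨X₀, ⟨Finset.mem_biUnion.2 ⟨Q₀, hQ₀, hX₀⟩, huX₀, hvX₀⟩, ?_⟩
    rintro X ⟨hX, huX, hvX⟩
    obtain ⟨Q, hQ, hXQ⟩ := Finset.mem_biUnion.1 hX
    have hQeq : Q = Q₀ := hQ₀uniq Q ⟨hQ, pieces_subset hXQ huX, pieces_subset hXQ hvX⟩
    subst hQeq
    rw [pieces_unique hne hXQ huX hvX, pieces_unique hne hX₀ huX₀ hvX₀]
  · -- cardinality
    have hdisj : ∀ Q ∈ P, ∀ Q' ∈ P, Q ≠ Q' → Disjoint (auxT F Q) (auxT F Q') := by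
      intro Q hQ Q' hQ' hne
      rw [Finset.disjoint_left]
      intro p hp hp'
      simp only [auxT, Finset.mem_filter, Finset.mem_product] at hp hp'
      have hpne : p.1 ≠ p.2 := hp.2.ne
      obtain ⟨Q₀, -, h1⟩ := hPpart p.1 p.2 (by simpa using hpne)
      exact hne ((h1 Q ⟨hQ, hp.1.1, hp.1.2⟩).trans (h1 Q' ⟨hQ', hp'.1.1, hp'.1.2⟩).symm)
    have key : (P.biUnion (fun Q => auxT F Q)).card ≤ 2 * F.edgeFinset.card := by
      rw [SimpleGraph.two_mul_card_edgeFinset (G := F)]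
      refine Finset.card_le_card ?_
      intro p hp
      obtain ⟨Q, -, hpQ⟩ := Finset.mem_biUnion.1 hp
      have := (Finset.mem_filter.1 hpQ).2
      simp only [Finset.mem_filter, Finset.mem_univ, true_and]
      exact this
    have hncard : F.edgeSet.ncard = F.edgeFinset.card := by
      rw [SimpleGraph.edgeFinset, Set.ncard_eq_toFinset_card']
    calc (P.biUnion (fun Q => pieces F Q)).card
        ≤ ∑ Q ∈ P, (pieces F Q).card := Finset.card_biUnion_le
      _ ≤ ∑ Q ∈ P, (1 + (auxT F Q).card * k) := by
          refine Finset.sum_le_sum fun Q hQ => ?_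
          calc (pieces F Q).card ≤ (auxE F Q).card + 1 := Finset.card_insert_le _ _
            _ ≤ (auxS F Q).card * Q.card + 1 :=
                Nat.add_le_add_right card_auxE_le _
            _ ≤ (auxT F Q).card * k + 1 :=
                Nat.add_le_add_right (Nat.mul_le_mul card_auxS_le (hk Q hQ)) _
            _ = 1 + (auxT F Q).card * k := Nat.add_comm _ _
      _ = P.card + (∑ Q ∈ P, (auxT F Q).card) * k := by
          rw [Finset.sum_add_distrib, Finset.sum_const, smul_eq_mul, Nat.mul_one,
            Finset.sum_mul]
      _ = P.card + (P.biUnion (fun Q => auxT F Q)).card * k := by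
          rw [Finset.card_biUnion hdisj]
      _ ≤ P.card + (2 * F.edgeFinset.card) * k :=
          Nat.add_le_add_left (Nat.mul_le_mul_right _ key) _
      _ = P.card + 2 * F.edgeSet.ncard * k := by rw [hncard]
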